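/- arXiv:2111.04409 — 4 statements merged into one kernel-verified Lean document; each statement's English description precedes it below -/
import Mathlib

section
/- Let V be a real inner product space, h₁,…,h_M ∈ V with M ≥ 1, y ∈ V, f = (1/M)·∑_{i=1}^M h_i, and let ℓ_λ = (1/M)·∑_{i=1}^M ‖h_i − y‖² − (λ/M)·∑_{i=1}^M ‖h_i − f‖² be the NCL loss. For λ = 1 the NCL loss equals the squared ensemble error: ℓ_1 = ‖f − y‖². -/
/-- **NCL loss at `λ = 1`.**
For predictions `h 1, …, h M` in a real inner product space `V`, `M ≥ 1`, a target `y ∈ V`,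
and the ensemble average `f = (1/M) • ∑ i, h i`, the NCL loss
`ℓ_λ = (1/M)·∑ ‖h i − y‖² − (λ/M)·∑ ‖h i − f‖²` at `λ = 1` equals the squared ensemble
error: `ℓ_1 = ‖f − y‖²`. -/
theorem ncl_loss_at_one
    {V : Type*} [NormedAddCommGroup V] [InnerProductSpace ℝ V]
    (M : ℕ) (hM : 1 ≤ M) (h : Fin M → V) (y : V) (f : V)
    (hf : f = (1 / (M : ℝ)) • ∑ i, h i) :
    (1 / (M : ℝ)) * ∑ i, ‖h i - y‖ ^ 2 - ((1 : ℝ) / (M : ℝ)) * ∑ i, ‖h i - f‖ ^ 2 =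
      ‖f - y‖ ^ 2 := by
  have hM0 : (M : ℝ) ≠ 0 := by positivity
  have hsum : ∑ i, h i = (M : ℝ) • f := by
    rw [hf, smul_smul]
    rw [mul_one_div, div_self hM0, one_smul]
  have hzero : ∑ i, (h i - f) = 0 := by
    rw [Finset.sum_sub_distrib, hsum, Finset.sum_const, Finset.card_univ,
      Fintype.card_fin, sub_eq_zero, ← Nat.cast_smul_eq_nsmul ℝ]
  have hexp : ∀ i : Fin M, ‖h i - y‖ ^ 2 =
      ‖h i - f‖ ^ 2 + 2 * inner ℝ (h i - f) (f - y) + ‖f - y‖ ^ 2 := by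
    intro i
    have : h i - y = (h i - f) + (f - y) := by abel
    rw [this, norm_add_sq_real]
  have hcross : ∑ i, inner ℝ (h i - f) (f - y) = (0 : ℝ) := by
    rw [← sum_inner, hzero, inner_zero_left]
  rw [Finset.sum_congr rfl fun i _ => hexp i]
  rw [Finset.sum_add_distrib, Finset.sum_add_distrib, ← Finset.mul_sum, hcross,
    Finset.sum_const, Finset.card_univ, Fintype.card_fin, nsmul_eq_mul]
  field_simp
  ring
end

section
/- Let V be a real inner product space, h₁,…,h_M ∈ V with M ≥ 1, y ∈ V, f = (1/M)·∑_{i=1}^M h_i, and let ℓ_λ = (1/M)·∑_{i=1}^M ‖h_i − y‖² − (λ/M)·∑_{i=1}^M ‖h_i − f‖² be the NCL loss. If λ ≤ 1 then ℓ_λ ≥ ‖f − y‖², and if λ ≥ 1 then ℓ_λ ≤ ‖f − y‖². In particular, for λ ≤ 1 the NCL loss upper-bounds the squared ensemble error. -/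
/-- **NCL loss bounds the squared ensemble error.**
For predictions `h 1, …, h M` in a real inner product space `V`, `M ≥ 1`, a target `y ∈ V`,
the ensemble average `f = (1/M) • ∑ i, h i`, and the NCL loss
`ℓ_λ = (1/M)·∑ ‖h i − y‖² − (λ/M)·∑ ‖h i − f‖²`:
if `λ ≤ 1` then `ℓ_λ ≥ ‖f − y‖²`, and if `λ ≥ 1` then `ℓ_λ ≤ ‖f − y‖²`. -/
theorem ncl_loss_bounds_ensemble_error
    {V : Type*} [NormedAddCommGroup V] [InnerProductSpace ℝ V]
    (M : ℕ) (hM : 1 ≤ M) (h : Fin M → V) (y : V) (f : V)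
    (hf : f = (1 / (M : ℝ)) • ∑ i, h i) (lam : ℝ) :
    (lam ≤ 1 →
      ‖f - y‖ ^ 2 ≤
        (1 / (M : ℝ)) * ∑ i, ‖h i - y‖ ^ 2 - (lam / (M : ℝ)) * ∑ i, ‖h i - f‖ ^ 2) ∧
    (1 ≤ lam →
      (1 / (M : ℝ)) * ∑ i, ‖h i - y‖ ^ 2 - (lam / (M : ℝ)) * ∑ i, ‖h i - f‖ ^ 2 ≤
        ‖f - y‖ ^ 2) := by
  have hM0 : (0:ℝ) < (M:ℝ) := by exact_mod_cast hM
  have hMne : (M:ℝ) ≠ 0 := ne_of_gt hM0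
  -- sum of deviations is zero
  have hsum : (∑ i, (h i - f)) = 0 := by
    rw [Finset.sum_sub_distrib, Finset.sum_const, Finset.card_univ, Fintype.card_fin, hf,
      ← Nat.cast_smul_eq_nsmul ℝ, smul_smul, mul_one_div_cancel hMne, one_smul, sub_self]
  -- cross term vanishes
  have hcross : (∑ i, inner ℝ (h i - f) (f - y) : ℝ) = 0 := by
    rw [← sum_inner, hsum, inner_zero_left]
  -- decomposition
  have hdecomp : (∑ i, ‖h i - y‖ ^ 2 : ℝ)
      = (∑ i, ‖h i - f‖ ^ 2) + (M:ℝ) * ‖f - y‖ ^ 2 := by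
    have : ∀ i : Fin M, (‖h i - y‖ ^ 2 : ℝ)
        = ‖h i - f‖ ^ 2 + 2 * inner ℝ (h i - f) (f - y) + ‖f - y‖ ^ 2 := by
      intro i
      have : h i - y = (h i - f) + (f - y) := by abel
      rw [this, @norm_add_sq_real]
    rw [Finset.sum_congr rfl fun i _ => this i]
    rw [Finset.sum_add_distrib, Finset.sum_add_distrib, ← Finset.mul_sum, hcross,
      Finset.sum_const, Finset.card_univ, Fintype.card_fin, nsmul_eq_mul]
    ring
  have hvar : (0:ℝ) ≤ ∑ i, ‖h i - f‖ ^ 2 :=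
    Finset.sum_nonneg fun i _ => sq_nonneg _
  constructor
  · intro hlam
    rw [hdecomp]
    have : 0 ≤ (1 - lam) / (M:ℝ) * ∑ i, ‖h i - f‖ ^ 2 :=
      mul_nonneg (div_nonneg (by linarith) (le_of_lt hM0)) hvar
    have key : (1/(M:ℝ)) * ((∑ i, ‖h i - f‖ ^ 2) + (M:ℝ) * ‖f - y‖ ^ 2)
        - (lam/(M:ℝ)) * ∑ i, ‖h i - f‖ ^ 2
        = ‖f - y‖ ^ 2 + (1 - lam) / (M:ℝ) * ∑ i, ‖h i - f‖ ^ 2 := by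
      field_simp; ring
    linarith
  · intro hlam
    rw [hdecomp]
    have : 0 ≤ (lam - 1) / (M:ℝ) * ∑ i, ‖h i - f‖ ^ 2 :=
      mul_nonneg (div_nonneg (by linarith) (le_of_lt hM0)) hvar
    have key : (1/(M:ℝ)) * ((∑ i, ‖h i - f‖ ^ 2) + (M:ℝ) * ‖f - y‖ ^ 2)
        - (lam/(M:ℝ)) * ∑ i, ‖h i - f‖ ^ 2
        = ‖f - y‖ ^ 2 - (lam - 1) / (M:ℝ) * ∑ i, ‖h i - f‖ ^ 2 := by
      field_simp; ring
    linarith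
end

section
/- Let (Ω, μ) be a probability space and M : Ω → ℝ a square-integrable random variable with E[M] ≥ 0 and E[M²] > 0. Then μ({ω : M(ω) ≤ 0}) ≤ 1 − E[M]² / E[M²]. This is the second-moment form of the C-bound: the 0-1 loss of a voting classifier, written as the probability that its margin M is non-positive, is bounded by one minus the squared first moment of the margin divided by its second moment. -/
open MeasureTheory ProbabilityTheory

private lemma c_bound_aux
    {Ω : Type*} [MeasurableSpace Ω] (μ : Measure Ω) [IsProbabilityMeasure μ]
    (M : Ω → ℝ) (hMm : Measurable M) (hM : MemLp M 2 μ)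
    (hmean : 0 ≤ ∫ ω, M ω ∂μ) (hsq : 0 < ∫ ω, (M ω) ^ 2 ∂μ) :
    μ {ω | M ω ≤ 0} ≤
      ENNReal.ofReal (1 - (∫ ω, M ω ∂μ) ^ 2 / ∫ ω, (M ω) ^ 2 ∂μ) := by
  set S : Set Ω := {ω | 0 < M ω} with hS_def
  have hS : MeasurableSet S := measurableSet_lt measurable_const hMm
  set p : ℝ := (μ S).toReal with hp_def
  have hp0 : 0 ≤ p := ENNReal.toReal_nonneg
  -- positive part
  set Mp : Ω → ℝ := fun ω => max (M ω) 0 with hMp_def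
  have hMp_mem : MemLp Mp 2 μ := hM.pos_part
  have hMp_int : Integrable Mp μ := (hM.integrable one_le_two).pos_part
  have hM_int : Integrable M μ := hM.integrable one_le_two
  -- indicator
  set g : Ω → ℝ := S.indicator (fun _ => (1:ℝ)) with hg_def
  have hg_mem : MemLp g 2 μ :=
    memLp_indicator_const 2 hS 1 (Or.inr (measure_ne_top μ S))
  have hgint : ∫ ω, g ω ∂μ = p := by
    simp [hg_def, integral_indicator_const, hS, hp_def, Measure.real_def]
  -- step 1 : ∫ M ≤ ∫ Mp
  have h1 : ∫ ω, M ω ∂μ ≤ ∫ ω, Mp ω ∂μ :=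
    integral_mono hM_int hMp_int fun ω => le_max_left _ _
  -- step 2 : ∫ Mp = ∫ Mp * g
  have h2 : ∫ ω, Mp ω ∂μ = ∫ ω, Mp ω * g ω ∂μ := by
    refine integral_congr_ae (Filter.Eventually.of_forall fun ω => ?_)
    by_cases h : 0 < M ω
    · simp [hg_def, Set.indicator_of_mem, h, hS_def]
    · have : Mp ω = 0 := max_eq_right (le_of_not_gt h)
      simp [this]
  -- Hölder
  have hconj : Real.HolderConjugate 2 2 := by
    constructor <;> norm_num
  have hMp_mem' : MemLp Mp (ENNReal.ofReal 2) μ := by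
    simpa [ENNReal.ofReal_ofNat] using hMp_mem
  have hg_mem' : MemLp g (ENNReal.ofReal 2) μ := by
    simpa [ENNReal.ofReal_ofNat] using hg_mem
  have h3 : ∫ ω, Mp ω * g ω ∂μ ≤
      (∫ ω, Mp ω ^ (2:ℝ) ∂μ) ^ (1/2:ℝ) * (∫ ω, g ω ^ (2:ℝ) ∂μ) ^ (1/2:ℝ) :=
    integral_mul_le_Lp_mul_Lq_of_nonneg hconj
      (Filter.Eventually.of_forall fun ω => le_max_right _ _)
      (Filter.Eventually.of_forall fun ω => Set.indicator_nonneg (fun _ _ => zero_le_one) ω)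
      hMp_mem' hg_mem'
  have hrpow : ∀ x : ℝ, x ^ (2:ℝ) = x ^ (2:ℕ) := fun x => by
    rw [← Real.rpow_natCast x 2]; norm_num
  simp only [hrpow] at h3
  have hg2 : ∫ ω, g ω ^ (2:ℕ) ∂μ = p := by
    rw [← hgint]
    refine integral_congr_ae (Filter.Eventually.of_forall fun ω => ?_)
    by_cases h : ω ∈ S
    · simp [hg_def, Set.indicator_of_mem h]
    · simp [hg_def, Set.indicator_of_notMem h]
  have hMp2_le : ∫ ω, Mp ω ^ (2:ℕ) ∂μ ≤ ∫ ω, M ω ^ 2 ∂μ := by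
    have hint2 : Integrable (fun ω => M ω ^ 2) μ := by
      have := hM.integrable_sq
      simpa [sq] using this
    have hintp2 : Integrable (fun ω => Mp ω ^ (2:ℕ)) μ := by
      have := hMp_mem.integrable_sq
      simpa [sq] using this
    refine integral_mono hintp2 hint2 fun ω => ?_
    rcases le_or_gt (M ω) 0 with h | h
    · have hz : Mp ω = 0 := max_eq_right h
      rw [hz]
      simpa using sq_nonneg (M ω)
    · have hz : Mp ω = M ω := max_eq_left h.le
      simp [hz]
  have hMp2_nonneg : 0 ≤ ∫ ω, Mp ω ^ (2:ℕ) ∂μ :=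
    integral_nonneg fun ω => by positivity
  -- combine: ∫ M ≤ (∫ M²)^(1/2) * p^(1/2)
  have h4 : ∫ ω, M ω ∂μ ≤ (∫ ω, M ω ^ 2 ∂μ) ^ (1/2:ℝ) * p ^ (1/2:ℝ) := by
    calc ∫ ω, M ω ∂μ ≤ ∫ ω, Mp ω * g ω ∂μ := h2 ▸ h1
      _ ≤ (∫ ω, Mp ω ^ (2:ℕ) ∂μ) ^ (1/2:ℝ) * (∫ ω, g ω ^ (2:ℕ) ∂μ) ^ (1/2:ℝ) := h3
      _ ≤ (∫ ω, M ω ^ 2 ∂μ) ^ (1/2:ℝ) * p ^ (1/2:ℝ) := by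
          rw [hg2]
          gcongr
  -- square
  have key : (∫ ω, M ω ∂μ) ^ 2 ≤ (∫ ω, M ω ^ 2 ∂μ) * p := by
    have := pow_le_pow_left₀ hmean h4 2
    calc (∫ ω, M ω ∂μ) ^ 2 ≤ ((∫ ω, M ω ^ 2 ∂μ) ^ (1/2:ℝ) * p ^ (1/2:ℝ)) ^ 2 := this
      _ = (∫ ω, M ω ^ 2 ∂μ) * p := by
          rw [mul_pow, ← Real.rpow_natCast ((∫ ω, M ω ^ 2 ∂μ) ^ (1/2:ℝ)) 2,
            ← Real.rpow_natCast (p ^ (1/2:ℝ)) 2,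
            ← Real.rpow_mul hsq.le, ← Real.rpow_mul hp0]
          norm_num
  set r : ℝ := (∫ ω, M ω ∂μ) ^ 2 / ∫ ω, M ω ^ 2 ∂μ with hr_def
  have hr0 : 0 ≤ r := div_nonneg (sq_nonneg _) hsq.le
  have hrp : r ≤ p := (div_le_iff₀ hsq).2 (by linarith [key])
  -- measure side
  have hcompl : {ω | M ω ≤ 0} = Sᶜ := by
    ext ω; simp [hS_def, not_lt]
  rw [hcompl, prob_compl_eq_one_sub hS]
  have hμS : μ S = ENNReal.ofReal p := by
    rw [hp_def, ENNReal.ofReal_toReal (measure_ne_top μ S)]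
  rw [hμS, ENNReal.ofReal_sub _ hr0]
  have : ENNReal.ofReal r ≤ ENNReal.ofReal p := ENNReal.ofReal_le_ofReal hrp
  simpa using tsub_le_tsub_left this (ENNReal.ofReal 1)

/-- **Second-moment form of the C-bound.**
For a square-integrable real random variable `M` (the margin of a voting classifier) on a
probability space `(Ω, μ)` with `E[M] ≥ 0` and `E[M²] > 0`, the probability that the margin
is non-positive (i.e. the 0-1 loss of the classifier) satisfies
`μ(M ≤ 0) ≤ 1 − E[M]² / E[M²]`. -/
theorem c_bound_second_moment
    {Ω : Type*} [MeasurableSpace Ω] (μ : Measure Ω) [IsProbabilityMeasure μ]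
    (M : Ω → ℝ) (hM : MemLp M 2 μ)
    (hmean : 0 ≤ ∫ ω, M ω ∂μ) (hsq : 0 < ∫ ω, (M ω) ^ 2 ∂μ) :
    μ {ω | M ω ≤ 0} ≤
      ENNReal.ofReal (1 - (∫ ω, M ω ∂μ) ^ 2 / ∫ ω, (M ω) ^ 2 ∂μ) := by
  obtain ⟨M', hM'm, hMM'⟩ := hM.aestronglyMeasurable.aemeasurable
  have hM'mem : MemLp M' 2 μ := hM.ae_eq hMM'
  have hint_eq : ∫ ω, M ω ∂μ = ∫ ω, M' ω ∂μ := integral_congr_ae hMM'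
  have hsq_eq : ∫ ω, (M ω) ^ 2 ∂μ = ∫ ω, (M' ω) ^ 2 ∂μ :=
    integral_congr_ae (hMM'.mono fun ω h => by simp only [h])
  have hset : μ {ω | M ω ≤ 0} = μ {ω | M' ω ≤ 0} :=
    measure_congr (hMM'.mono fun ω h => by
      show (M ω ≤ 0) = (M' ω ≤ 0); rw [h])
  rw [hset, hint_eq, hsq_eq]
  exact c_bound_aux μ M' hM'm hM'mem (hint_eq ▸ hmean) (hsq_eq ▸ hsq)
end

section
/- (Deterministic C-bound for uniform majority votes.) Let (Ω, μ) be a probability space, Y : Ω → {−1, +1} a measurable label, and h₁,…,h_M : Ω → {−1, +1} measurable classifiers with M ≥ 1; let f = (1/M)·∑_{i=1}^M h_i and let r̄ = (1/M)·∑_{i=1}^M μ({h_i ≠ Y}) be the average 0-1 risk of the voters. If r̄ < 1/2 and E[f²] > 0, then the 0-1 risk of the majority vote satisfies μ({ω : Y(ω)·f(ω) ≤ 0}) ≤ 1 − (1 − 2·r̄)² / E[f²]. -/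
open MeasureTheory

set_option maxHeartbeats 1600000 in
/-- **Deterministic C-bound for uniform majority votes.**
On a probability space `(Ω, μ)`, let `Y : Ω → {−1,+1}` be the label and
`h 1, …, h M : Ω → {−1,+1}` (`M ≥ 1`) binary classifiers, `f = (1/M)·∑ i, h i` their uniform
convex combination and `r̄ = (1/M)·∑ i, μ(h i ≠ Y)` the average 0-1 risk of the voters.
If `r̄ < 1/2` and `E[f²] > 0`, then the 0-1 risk of the majority vote satisfies
`μ(Y·f ≤ 0) ≤ 1 − (1 − 2·r̄)² / E[f²]`. -/
theorem deterministic_c_bound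
    {Ω : Type*} [MeasurableSpace Ω] (μ : Measure Ω) [IsProbabilityMeasure μ]
    (M : ℕ) (hM : 1 ≤ M)
    (Y : Ω → ℝ) (hYmeas : Measurable Y) (hY : ∀ ω, Y ω = 1 ∨ Y ω = -1)
    (h : Fin M → Ω → ℝ) (hmeas : ∀ i, Measurable (h i))
    (hvals : ∀ i ω, h i ω = 1 ∨ h i ω = -1)
    (f : Ω → ℝ) (hf : f = fun ω => (1 / (M : ℝ)) * ∑ i, h i ω)
    (rbar : ℝ) (hrbar : rbar = (1 / (M : ℝ)) * ∑ i, (μ {ω | h i ω ≠ Y ω}).toReal)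
    (hrisk : rbar < 1 / 2) (hsq : 0 < ∫ ω, (f ω) ^ 2 ∂μ) :
    μ {ω | Y ω * f ω ≤ 0} ≤
      ENNReal.ofReal (1 - (1 - 2 * rbar) ^ 2 / ∫ ω, (f ω) ^ 2 ∂μ) := by
  have hMpos : (0:ℝ) < M := by exact_mod_cast hM
  set g : Ω → ℝ := fun ω => Y ω * f ω with hg
  have hfmeas : Measurable f := by
    rw [hf]; exact (Finset.measurable_sum _ (fun i _ => hmeas i)).const_mul _
  have hgmeas : Measurable g := hYmeas.mul hfmeas
  -- boundedness
  have hfbd : ∀ ω, |f ω| ≤ 1 := by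
    intro ω
    rw [hf]
    have : |∑ i, h i ω| ≤ (M:ℝ) := by
      calc |∑ i, h i ω| ≤ ∑ i, |h i ω| := Finset.abs_sum_le_sum_abs _ _
        _ = ∑ _i : Fin M, (1:ℝ) := by
            apply Finset.sum_congr rfl; intro i _
            rcases hvals i ω with h1 | h1 <;> rw [h1] <;> norm_num
        _ = (M:ℝ) := by simp
    rw [abs_mul, abs_of_nonneg (by positivity : (0:ℝ) ≤ 1/(M:ℝ))]
    calc 1/(M:ℝ) * |∑ i, h i ω| ≤ 1/(M:ℝ) * (M:ℝ) := by
          apply mul_le_mul_of_nonneg_left this; positivity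
      _ = 1 := by field_simp
  have hYabs : ∀ ω, |Y ω| = 1 := by
    intro ω; rcases hY ω with h1 | h1 <;> rw [h1] <;> norm_num
  have hgbd : ∀ ω, |g ω| ≤ 1 := by
    intro ω; rw [hg]; simp only [abs_mul, hYabs ω, one_mul]; exact hfbd ω
  have hgint : Integrable g μ :=
    (integrable_const (1:ℝ)).mono' hgmeas.aestronglyMeasurable
      (Filter.Eventually.of_forall fun ω => by simpa using hgbd ω)
  -- g² = f²
  have hgsq : ∀ ω, g ω ^ 2 = f ω ^ 2 := by
    intro ω
    rw [hg]
    have : Y ω ^ 2 = 1 := by rcases hY ω with h1 | h1 <;> rw [h1] <;> norm_num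
    ring_nf
    rw [mul_comm]
    nlinarith [this]
  -- the mean of g
  have hne : ∀ i, MeasurableSet {ω | h i ω ≠ Y ω} :=
    fun i => (measurableSet_eq_fun (hmeas i) hYmeas).compl
  have hmean_i : ∀ i, ∫ ω, Y ω * h i ω ∂μ = 1 - 2 * (μ {ω | h i ω ≠ Y ω}).toReal := by
    intro i
    have heq : (fun ω => Y ω * h i ω) =
        fun ω => 1 - 2 * Set.indicator {ω | h i ω ≠ Y ω} (fun _ => (1:ℝ)) ω := by
      funext ω
      by_cases hc : h i ω = Y ω
      · rw [Set.indicator_of_notMem (by simpa using hc)]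
        rcases hY ω with h1 | h1 <;> rw [hc, h1] <;> ring
      · rw [Set.indicator_of_mem (by simpa using hc)]
        rcases hY ω with h1 | h1 <;> rcases hvals i ω with h2 | h2 <;>
          simp_all <;> ring
    rw [heq]
    have hind : Integrable (Set.indicator {ω | h i ω ≠ Y ω} (fun _ => (1:ℝ))) μ :=
      (integrable_const (1:ℝ)).indicator (hne i)
    rw [integral_sub (integrable_const 1) (hind.const_mul 2), integral_const,
      integral_const_mul, integral_indicator_const _ (hne i)]
    simp [Measure.real]
  have hmean : ∫ ω, g ω ∂μ = 1 - 2 * rbar := by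
    have : g = fun ω => ∑ i, (1/(M:ℝ)) * (Y ω * h i ω) := by
      funext ω
      simp only [hg, hf, Finset.mul_sum]
      exact Finset.sum_congr rfl fun i _ => by ring
    rw [this, integral_finset_sum]
    · have : ∀ i ∈ Finset.univ, ∫ ω, 1/(M:ℝ) * (Y ω * h i ω) ∂μ
          = 1/(M:ℝ) * (1 - 2 * (μ {ω | h i ω ≠ Y ω}).toReal) := by
        intro i _
        rw [integral_const_mul, hmean_i i]
      rw [Finset.sum_congr rfl this, ← Finset.mul_sum, Finset.sum_sub_distrib,
        ← Finset.mul_sum, hrbar]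
      simp only [Finset.sum_const, Finset.card_univ, Fintype.card_fin, nsmul_eq_mul, mul_one]
      field_simp
    · intro i _
      refine ((integrable_const (1:ℝ)).mono' ((hYmeas.mul (hmeas i)).aestronglyMeasurable)
        (Filter.Eventually.of_forall fun ω => ?_)).const_mul _
      rw [Real.norm_eq_abs, Pi.mul_apply, abs_mul, hYabs ω]
      rcases hvals i ω with h1 | h1 <;> rw [h1] <;> norm_num
  have hm : (0:ℝ) < 1 - 2 * rbar := by linarith
  -- key objects
  set E : ℝ := ∫ ω, (f ω) ^ 2 ∂μ with hE
  set A : Set Ω := {ω | 0 < g ω} with hA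
  have hAmeas : MeasurableSet A := measurableSet_lt measurable_const hgmeas
  set t : ℝ := (μ A).toReal with ht
  have htnonneg : 0 ≤ t := ENNReal.toReal_nonneg
  set u : Ω → ℝ := fun ω => max (g ω) 0 with hu
  have humeas : Measurable u := hgmeas.max measurable_const
  have hubd : ∀ ω, ‖u ω‖ ≤ 1 := by
    intro ω
    rw [Real.norm_eq_abs, abs_of_nonneg (le_max_right _ _)]
    exact max_le ((le_abs_self _).trans (hgbd ω)) zero_le_one
  set χ : Ω → ℝ := Set.indicator A (fun _ => (1:ℝ)) with hχ
  have hχmeas : Measurable χ := measurable_const.indicator hAmeas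
  have hχbd : ∀ ω, ‖χ ω‖ ≤ 1 := by
    intro ω
    rw [hχ]
    by_cases hc : ω ∈ A
    · rw [Set.indicator_of_mem hc]; norm_num
    · rw [Set.indicator_of_notMem hc]; norm_num
  have huχ : ∀ ω, u ω = u ω * χ ω := by
    intro ω
    rw [hχ]
    by_cases hc : ω ∈ A
    · rw [Set.indicator_of_mem hc]; ring
    · rw [Set.indicator_of_notMem hc, mul_zero, hu]
      simp only [hA, Set.mem_setOf_eq, not_lt] at hc
      exact max_eq_right hc
  -- Cauchy–Schwarz
  have hconj : Real.HolderConjugate 2 2 := Real.HolderConjugate.two_two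
  have huL2 : MemLp u (ENNReal.ofReal 2) μ :=
    MemLp.of_bound humeas.aestronglyMeasurable 1 (Filter.Eventually.of_forall hubd)
  have hχL2 : MemLp χ (ENNReal.ofReal 2) μ :=
    MemLp.of_bound hχmeas.aestronglyMeasurable 1 (Filter.Eventually.of_forall hχbd)
  have hCS := integral_mul_le_Lp_mul_Lq_of_nonneg hconj
    (Filter.Eventually.of_forall fun ω => le_max_right (g ω) 0)
    (Filter.Eventually.of_forall fun ω => Set.indicator_nonneg (fun _ _ => zero_le_one) ω)
    huL2 hχL2
  -- rewrite the rpow's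
  have hrpow2 : ∀ x : ℝ, 0 ≤ x → x ^ (2:ℝ) = x ^ (2:ℕ) := by
    intro x hx
    rw [show ((2:ℝ)) = ((2:ℕ):ℝ) by norm_num, Real.rpow_natCast]
  have hualt : ∫ ω, u ω ^ (2:ℝ) ∂μ = ∫ ω, u ω ^ 2 ∂μ := by
    apply integral_congr_ae; apply Filter.Eventually.of_forall; intro ω
    exact hrpow2 _ (le_max_right _ _)
  have hχalt : ∫ ω, χ ω ^ (2:ℝ) ∂μ = t := by
    have : ∀ ω, χ ω ^ (2:ℝ) = χ ω := by
      intro ω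
      rw [hχ]
      by_cases hc : ω ∈ A
      · rw [Set.indicator_of_mem hc]; simp
      · rw [Set.indicator_of_notMem hc]
        rw [Real.zero_rpow (by norm_num)]
    rw [integral_congr_ae (Filter.Eventually.of_forall this), hχ,
      integral_indicator_const _ hAmeas]
    simp [ht, Measure.real]
  -- ∫u² ≤ E
  have husq_int : Integrable (fun ω => u ω ^ 2) μ :=
    (integrable_const (1:ℝ)).mono' (humeas.pow_const 2).aestronglyMeasurable
      (Filter.Eventually.of_forall fun ω => by
        rw [Real.norm_eq_abs, abs_pow]
        calc |u ω| ^ 2 ≤ 1 ^ 2 := by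
              apply pow_le_pow_left₀ (abs_nonneg _)
              simpa [Real.norm_eq_abs] using hubd ω
          _ = 1 := one_pow 2)
  have hfsq_int : Integrable (fun ω => f ω ^ 2) μ :=
    (integrable_const (1:ℝ)).mono' (hfmeas.pow_const 2).aestronglyMeasurable
      (Filter.Eventually.of_forall fun ω => by
        rw [Real.norm_eq_abs, abs_pow]
        calc |f ω| ^ 2 ≤ 1 ^ 2 := pow_le_pow_left₀ (abs_nonneg _) (hfbd ω) 2
          _ = 1 := one_pow 2)
  have husq_le : ∫ ω, u ω ^ 2 ∂μ ≤ E := by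
    rw [hE]
    apply integral_mono husq_int hfsq_int
    intro ω
    show u ω ^ 2 ≤ f ω ^ 2
    rw [← hgsq ω]
    rcases le_or_gt (g ω) 0 with hc | hc
    · have : u ω = 0 := max_eq_right hc
      rw [this]; simpa using sq_nonneg (g ω)
    · have : u ω = g ω := max_eq_left hc.le
      rw [this]
  have huint : Integrable u μ :=
    (integrable_const (1:ℝ)).mono' humeas.aestronglyMeasurable
      (Filter.Eventually.of_forall hubd)
  -- combine: 1 - 2rbar ≤ √E · √t
  have hEnonneg : 0 ≤ E := hsq.le
  have key : 1 - 2 * rbar ≤ Real.sqrt E * Real.sqrt t := by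
    have h1 : 1 - 2 * rbar ≤ ∫ ω, u ω ∂μ := by
      rw [← hmean]
      exact integral_mono hgint huint (fun ω => le_max_left _ _)
    have h2 : ∫ ω, u ω ∂μ = ∫ ω, u ω * χ ω ∂μ :=
      integral_congr_ae (Filter.Eventually.of_forall huχ)
    have h3 : ∫ ω, u ω * χ ω ∂μ ≤
        (∫ ω, u ω ^ (2:ℝ) ∂μ) ^ (1/(2:ℝ)) * (∫ ω, χ ω ^ (2:ℝ) ∂μ) ^ (1/(2:ℝ)) := hCS
    have husqnn : 0 ≤ ∫ ω, u ω ^ 2 ∂μ := integral_nonneg (fun ω => by positivity)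
    have h4 : (∫ ω, u ω ^ (2:ℝ) ∂μ) ^ (1/(2:ℝ)) ≤ Real.sqrt E := by
      rw [hualt, ← Real.sqrt_eq_rpow]
      exact Real.sqrt_le_sqrt husq_le
    have h5 : (∫ ω, χ ω ^ (2:ℝ) ∂μ) ^ (1/(2:ℝ)) = Real.sqrt t := by
      rw [hχalt, ← Real.sqrt_eq_rpow]
    calc 1 - 2 * rbar ≤ ∫ ω, u ω * χ ω ∂μ := h2 ▸ h1
      _ ≤ (∫ ω, u ω ^ (2:ℝ) ∂μ) ^ (1/(2:ℝ)) * (∫ ω, χ ω ^ (2:ℝ) ∂μ) ^ (1/(2:ℝ)) := h3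
      _ ≤ Real.sqrt E * Real.sqrt t := by
          rw [h5]
          exact mul_le_mul_of_nonneg_right h4 (Real.sqrt_nonneg _)
  have hsq_le : (1 - 2 * rbar) ^ 2 ≤ E * t := by
    have := pow_le_pow_left₀ hm.le key 2
    rwa [mul_pow, Real.sq_sqrt hEnonneg, Real.sq_sqrt htnonneg] at this
  have ht_ge : (1 - 2 * rbar) ^ 2 / E ≤ t := by
    rw [div_le_iff₀ hsq]
    linarith [hsq_le]
  -- conclude
  have hset : {ω | Y ω * f ω ≤ 0} = Aᶜ := by
    ext ω; simp [hA, hg, not_lt]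
  rw [hset, measure_compl hAmeas (measure_ne_top μ A), measure_univ]
  have h1 : μ A ≤ 1 := prob_le_one
  rw [← ENNReal.ofReal_toReal (a := 1 - μ A) (by
    exact ((tsub_le_self).trans_lt (lt_top_iff_ne_top.mpr ENNReal.one_ne_top)).ne)]
  apply ENNReal.ofReal_le_ofReal
  rw [ENNReal.toReal_sub_of_le h1 ENNReal.one_ne_top]
  simp only [ENNReal.toReal_one, ← ht]
  linarith [ht_ge]
end
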